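/- A symbol Λ is cuspidal — i.e. rank(Λ) = ⌊def(Λ)²/4⌋ — if and only if Λ is equivalent to (∅, ∅), or to ({k, k−1, …, 1, 0}, ∅) or to (∅, {k, k−1, …, 1, 0}) for some k ∈ ℕ. -/

import Mathlib

/-!
A symbol Λ is cuspidal — i.e. `rank(Λ) = ⌊def(Λ)²/4⌋` — iff Λ is equivalent to `(∅, ∅)`,
or to `({k, k−1, …, 1, 0}, ∅)` or to `(∅, {k, k−1, …, 1, 0})` for some `k ∈ ℕ`.
-/

open scoped Classical

noncomputable section

/-- A symbol: an ordered pair of finite subsets of ℕ. -/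
abbrev LSymbol := Finset ℕ × Finset ℕ

/-- The `d`-shift of a beta-set. -/
def shiftSet (d : ℕ) (A : Finset ℕ) : Finset ℕ :=
  Finset.range d ∪ A.image (· + d)

/-- The `d`-shift of a symbol. -/
def dShift (d : ℕ) (Λ : LSymbol) : LSymbol := (shiftSet d Λ.1, shiftSet d Λ.2)

/-- Equivalence of symbols: the equivalence relation generated by `d`-shifts. -/
def SymbolEquiv : LSymbol → LSymbol → Prop :=
  Relation.EqvGen fun Λ Λ' => ∃ d : ℕ, Λ' = dShift d Λ

/-- The rank of a symbol:
`rank(Λ) = Σ_{a∈A} a + Σ_{b∈B} b − ⌊((|A|+|B|−1)/2)²⌋`. -/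
def symbolRank (Λ : LSymbol) : ℤ :=
  ((∑ a ∈ Λ.1, a : ℕ) : ℤ) + ((∑ b ∈ Λ.2, b : ℕ) : ℤ) -
    ((Λ.1.card : ℤ) + (Λ.2.card : ℤ) - 1) ^ 2 / 4

/-- The defect of a symbol: `def(Λ) = |A| − |B|`. -/
def symbolDefect (Λ : LSymbol) : ℤ := (Λ.1.card : ℤ) - (Λ.2.card : ℤ)

/-! ### Auxiliary lemmas -/

lemma mem_shiftSet {d x : ℕ} {A : Finset ℕ} :
    x ∈ shiftSet d A ↔ x < d ∨ ∃ a ∈ A, a + d = x := by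
  simp [shiftSet]

lemma card_shiftSet (d : ℕ) (A : Finset ℕ) : (shiftSet d A).card = d + A.card := by
  rw [shiftSet, Finset.card_union_of_disjoint, Finset.card_range,
    Finset.card_image_of_injective _ (add_left_injective d)]
  rw [Finset.disjoint_left]
  intro x hx hx'
  simp only [Finset.mem_range] at hx
  simp only [Finset.mem_image] at hx'
  omega

lemma sum_shiftSet (d : ℕ) (A : Finset ℕ) :
    ∑ x ∈ shiftSet d A, x = (∑ i ∈ Finset.range d, i) + ((∑ a ∈ A, a) + d * A.card) := by
  rw [shiftSet, Finset.sum_union, Finset.sum_image (by intro a _ b _ h; simp only at h; omega)]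
  · congr 1
    rw [Finset.sum_add_distrib, Finset.sum_const, smul_eq_mul, mul_comm]
  · rw [Finset.disjoint_left]
    intro x hx hx'
    simp only [Finset.mem_range] at hx
    simp only [Finset.mem_image] at hx'
    omega

lemma sum_range_card_le (A : Finset ℕ) :
    ∑ i ∈ Finset.range A.card, i ≤ ∑ a ∈ A, a := by
  classical
  set n := A.card with hn
  set R := Finset.range n with hR
  have hcard : (R \ A).card = (A \ R).card := by
    have h1 : (A \ R).card + (A ∩ R).card = A.card := Finset.card_sdiff_add_card_inter A R
    have h2 : (R \ A).card + (R ∩ A).card = R.card := Finset.card_sdiff_add_card_inter R A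
    rw [Finset.inter_comm] at h2
    have h3 : R.card = n := Finset.card_range n
    omega
  have hA : ∑ a ∈ A ∩ R, a + ∑ a ∈ A \ R, a = ∑ a ∈ A, a := Finset.sum_inter_add_sum_sdiff A R _
  have hRs : ∑ a ∈ R ∩ A, a + ∑ a ∈ R \ A, a = ∑ a ∈ R, a := Finset.sum_inter_add_sum_sdiff R A _
  have hge : (A \ R).card * n ≤ ∑ a ∈ A \ R, a := by
    calc (A \ R).card * n = (A \ R).card • n := by rw [smul_eq_mul]
    _ ≤ ∑ a ∈ A \ R, a := Finset.card_nsmul_le_sum _ _ _ (by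
        intro x hx
        simp only [Finset.mem_sdiff, hR, Finset.mem_range] at hx
        omega)
  have hle : ∑ a ∈ R \ A, a ≤ (A \ R).card * n := by
    rcases Nat.eq_zero_or_pos n with h0 | h0
    · have : R = ∅ := by simp [hR, h0]
      simp [this]
    · calc ∑ a ∈ R \ A, a ≤ (R \ A).card • (n - 1) := Finset.sum_le_card_nsmul _ _ _ (by
            intro x hx
            simp only [Finset.mem_sdiff, hR, Finset.mem_range] at hx
            omega)
      _ = (A \ R).card * (n-1) := by rw [hcard, smul_eq_mul]
      _ ≤ (A \ R).card * n := Nat.mul_le_mul_left _ (by omega)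
  rw [Finset.inter_comm] at hRs
  omega

lemma sum_range_card_lt (A : Finset ℕ) (h : A ≠ Finset.range A.card) :
    ∑ i ∈ Finset.range A.card, i < ∑ a ∈ A, a := by
  classical
  set n := A.card with hn
  set R := Finset.range n with hR
  have hcard : (R \ A).card = (A \ R).card := by
    have h1 : (A \ R).card + (A ∩ R).card = A.card := Finset.card_sdiff_add_card_inter A R
    have h2 : (R \ A).card + (R ∩ A).card = R.card := Finset.card_sdiff_add_card_inter R A
    rw [Finset.inter_comm] at h2
    have h3 : R.card = n := Finset.card_range n
    omega
  have hc : 0 < (A \ R).card := by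
    rcases Nat.eq_zero_or_pos (A \ R).card with h0 | h0
    · exfalso
      apply h
      have h1 : A \ R = ∅ := Finset.card_eq_zero.mp h0
      have h2 : R \ A = ∅ := Finset.card_eq_zero.mp (by omega)
      rw [Finset.sdiff_eq_empty_iff_subset] at h1 h2
      exact Finset.Subset.antisymm h1 h2
    · exact h0
  have hn0 : 0 < n := by
    rcases Nat.eq_zero_or_pos n with h0 | h0
    · exfalso
      have : A = ∅ := Finset.card_eq_zero.mp h0
      apply h
      rw [this, hR, h0]
      simp
    · exact h0
  have hA : ∑ a ∈ A ∩ R, a + ∑ a ∈ A \ R, a = ∑ a ∈ A, a := Finset.sum_inter_add_sum_sdiff A R _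
  have hRs : ∑ a ∈ R ∩ A, a + ∑ a ∈ R \ A, a = ∑ a ∈ R, a := Finset.sum_inter_add_sum_sdiff R A _
  have hge : (A \ R).card * n ≤ ∑ a ∈ A \ R, a := by
    calc (A \ R).card * n = (A \ R).card • n := by rw [smul_eq_mul]
    _ ≤ ∑ a ∈ A \ R, a := Finset.card_nsmul_le_sum _ _ _ (by
        intro x hx
        simp only [Finset.mem_sdiff, hR, Finset.mem_range] at hx
        omega)
  have hle : ∑ a ∈ R \ A, a ≤ (A \ R).card * (n - 1) := by
    calc ∑ a ∈ R \ A, a ≤ (R \ A).card • (n - 1) := Finset.sum_le_card_nsmul _ _ _ (by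
          intro x hx
          simp only [Finset.mem_sdiff, hR, Finset.mem_range] at hx
          omega)
    _ = (A \ R).card * (n-1) := by rw [hcard, smul_eq_mul]
  rw [Finset.inter_comm] at hRs
  have : (A \ R).card * (n - 1) < (A \ R).card * n := by
    exact Nat.mul_lt_mul_of_pos_left (by omega) hc
  omega

lemma gauss (n : ℕ) : ((∑ i ∈ Finset.range n, i : ℕ) : ℤ) * 2 = (n : ℤ) * ((n : ℤ) - 1) := by
  cases n with
  | zero => simp
  | succ m =>
    have := Finset.sum_range_id_mul_two (m + 1)
    have h : ((∑ i ∈ Finset.range (m+1), i : ℕ) : ℤ) * 2 = ((m : ℤ) + 1) * m := by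
      exact_mod_cast congrArg (Nat.cast : ℕ → ℤ) this
    rw [h]; push_cast; ring

lemma key_identity (a b : ℕ) :
    ((∑ i ∈ Finset.range a, i : ℕ) : ℤ) + ((∑ i ∈ Finset.range b, i : ℕ) : ℤ) =
      ((a : ℤ) + (b : ℤ) - 1) ^ 2 / 4 + ((a : ℤ) - (b : ℤ)) ^ 2 / 4 := by
  have ga := gauss a
  have gb := gauss b
  rcases Nat.even_or_odd (a + b) with ⟨m, hm⟩ | ⟨m, hm⟩
  · have hm' : (a : ℤ) + b = 2 * m := by omega
    have e1 : ((a : ℤ) + b - 1) ^ 2 / 4 = (m : ℤ) * m - m := by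
      have h1 : ((a : ℤ) + b - 1) ^ 2 = 4 * ((m : ℤ) * m - m) + 1 := by
        rw [show (a : ℤ) + b - 1 = 2 * m - 1 by omega]; ring
      omega
    have e2 : ((a : ℤ) - b) ^ 2 / 4 = ((a : ℤ) - m) * ((a : ℤ) - m) := by
      have h2 : ((a : ℤ) - b) ^ 2 = 4 * (((a : ℤ) - m) * ((a : ℤ) - m)) := by
        rw [show (a : ℤ) - b = 2 * ((a : ℤ) - m) by omega]; ring
      omega
    rw [e1, e2]
    have final : (((∑ i ∈ Finset.range a, i : ℕ) : ℤ) + ((∑ i ∈ Finset.range b, i : ℕ) : ℤ)) * 2 =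
        ((m : ℤ) * m - m + ((a : ℤ) - m) * ((a : ℤ) - m)) * 2 := by
      linear_combination ga + gb + ((b : ℤ) - a + 2 * m - 1) * hm'
    omega
  · have hm' : (a : ℤ) + b = 2 * m + 1 := by omega
    have e1 : ((a : ℤ) + b - 1) ^ 2 / 4 = (m : ℤ) * m := by
      have h1 : ((a : ℤ) + b - 1) ^ 2 = 4 * ((m : ℤ) * m) := by
        rw [show (a : ℤ) + b - 1 = 2 * m by omega]; ring
      omega
    have e2 : ((a : ℤ) - b) ^ 2 / 4 = ((a : ℤ) - m) * ((a : ℤ) - m) - ((a : ℤ) - m) := by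
      have h2 : ((a : ℤ) - b) ^ 2 = 4 * (((a : ℤ) - m) * ((a : ℤ) - m) - ((a : ℤ) - m)) + 1 := by
        rw [show (a : ℤ) - b = 2 * ((a : ℤ) - m) - 1 by omega]; ring
      omega
    rw [e1, e2]
    have final : (((∑ i ∈ Finset.range a, i : ℕ) : ℤ) + ((∑ i ∈ Finset.range b, i : ℕ) : ℤ)) * 2 =
        ((m : ℤ) * m + (((a : ℤ) - m) * ((a : ℤ) - m) - ((a : ℤ) - m))) * 2 := by
      linear_combination ga + gb + ((b : ℤ) - a + 2 * m) * hm'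
    omega

lemma symbolDefect_dShift (d : ℕ) (Λ : LSymbol) : symbolDefect (dShift d Λ) = symbolDefect Λ := by
  simp only [symbolDefect, dShift, card_shiftSet]
  push_cast
  ring

lemma symbolRank_dShift (d : ℕ) (Λ : LSymbol) : symbolRank (dShift d Λ) = symbolRank Λ := by
  obtain ⟨A, B⟩ := Λ
  simp only [symbolRank, dShift, card_shiftSet, sum_shiftSet]
  have gd := gauss d
  have hq : ((↑(d + A.card) : ℤ) + (↑(d + B.card) : ℤ) - 1) ^ 2 / 4 =
      ((A.card : ℤ) + (B.card : ℤ) - 1) ^ 2 / 4 +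
        ((d : ℤ) * ((A.card : ℤ) + (B.card : ℤ) - 1) + (d : ℤ) * d) := by
    have h : ((↑(d + A.card) : ℤ) + (↑(d + B.card) : ℤ) - 1) ^ 2 =
        ((A.card : ℤ) + (B.card : ℤ) - 1) ^ 2 +
          4 * ((d : ℤ) * ((A.card : ℤ) + (B.card : ℤ) - 1) + (d : ℤ) * d) := by
      push_cast; ring
    rw [h, Int.add_mul_ediv_left _ _ (by norm_num : (4:ℤ) ≠ 0)]
  rw [hq]
  push_cast at gd ⊢
  linarith [gd]

lemma symbolEquiv_invariants {Λ Λ' : LSymbol} (h : SymbolEquiv Λ Λ') :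
    symbolRank Λ = symbolRank Λ' ∧ symbolDefect Λ = symbolDefect Λ' := by
  induction h with
  | rel x y h =>
    obtain ⟨d, rfl⟩ := h
    exact ⟨(symbolRank_dShift d x).symm, (symbolDefect_dShift d x).symm⟩
  | refl x => exact ⟨rfl, rfl⟩
  | symm x y _ ih => exact ⟨ih.1.symm, ih.2.symm⟩
  | trans x y z _ _ ih1 ih2 => exact ⟨ih1.1.trans ih2.1, ih1.2.trans ih2.2⟩

lemma cuspidal_iff_ranges (A B : Finset ℕ) :
    symbolRank (A, B) = (symbolDefect (A, B)) ^ 2 / 4 ↔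
      A = Finset.range A.card ∧ B = Finset.range B.card := by
  have key := key_identity A.card B.card
  simp only [symbolRank, symbolDefect]
  constructor
  · intro h
    by_contra hc
    have hlt : (∑ i ∈ Finset.range A.card, i) + (∑ i ∈ Finset.range B.card, i)
        < (∑ a ∈ A, a) + (∑ b ∈ B, b) := by
      rcases not_and_or.mp hc with hA | hB
      · have h1 := sum_range_card_lt A hA
        have h2 := sum_range_card_le B
        omega
      · have h1 := sum_range_card_le A
        have h2 := sum_range_card_lt B hB
        omega
    omega
  · rintro ⟨hA, hB⟩
    conv_lhs => rw [hA, hB]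
    simp only [Finset.card_range]
    omega

lemma shiftSet_range (m k : ℕ) : shiftSet m (Finset.range k) = Finset.range (m + k) := by
  ext x
  simp only [shiftSet, Finset.mem_union, Finset.mem_image, Finset.mem_range]
  constructor
  · rintro (h | ⟨a, ha, rfl⟩) <;> omega
  · intro h
    rcases lt_or_ge x m with h' | h'
    · exact Or.inl h'
    · exact Or.inr ⟨x - m, by omega, by omega⟩

lemma shiftSet_empty (m : ℕ) : shiftSet m ∅ = Finset.range m := by
  simp [shiftSet]

/-- A symbol is cuspidal iff it is equivalent to `(∅,∅)`, to
`({k,…,0}, ∅)` or to `(∅, {k,…,0})` for some `k ∈ ℕ`. -/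
theorem symbol_cuspidal_iff (Λ : LSymbol) :
    symbolRank Λ = (symbolDefect Λ) ^ 2 / 4 ↔
      SymbolEquiv Λ (∅, ∅) ∨
      (∃ k : ℕ, SymbolEquiv Λ (Finset.range (k + 1), ∅)) ∨
      (∃ k : ℕ, SymbolEquiv Λ (∅, Finset.range (k + 1))) := by
  obtain ⟨A, B⟩ := Λ
  rw [cuspidal_iff_ranges]
  constructor
  · rintro ⟨hA, hB⟩
    rcases le_total A.card B.card with hab | hab
    · obtain ⟨c, hc⟩ := Nat.exists_eq_add_of_le hab
      cases c with
      | zero =>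
        left
        refine Relation.EqvGen.symm _ _ (Relation.EqvGen.rel _ _ ⟨A.card, ?_⟩)
        simp only [dShift, shiftSet_empty]
        rw [Prod.mk.injEq]
        exact ⟨hA, by rw [hB, hc, Nat.add_zero]⟩
      | succ k =>
        right; right
        refine ⟨k, Relation.EqvGen.symm _ _ (Relation.EqvGen.rel _ _ ⟨A.card, ?_⟩)⟩
        simp only [dShift, shiftSet_empty, shiftSet_range]
        rw [Prod.mk.injEq]
        exact ⟨hA, by rw [hB, hc, Nat.add_zero]⟩
    · obtain ⟨c, hc⟩ := Nat.exists_eq_add_of_le hab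
      cases c with
      | zero =>
        left
        refine Relation.EqvGen.symm _ _ (Relation.EqvGen.rel _ _ ⟨B.card, ?_⟩)
        simp only [dShift, shiftSet_empty]
        rw [Prod.mk.injEq]
        exact ⟨by rw [hA, hc, Nat.add_zero], hB⟩
      | succ k =>
        right; left
        refine ⟨k, Relation.EqvGen.symm _ _ (Relation.EqvGen.rel _ _ ⟨B.card, ?_⟩)⟩
        simp only [dShift, shiftSet_empty, shiftSet_range]
        rw [Prod.mk.injEq]
        exact ⟨by rw [hA, hc, Nat.add_zero], hB⟩
  · intro h
    have hcusp : symbolRank (A, B) = (symbolDefect (A, B)) ^ 2 / 4 := by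
      rcases h with h | ⟨k, h⟩ | ⟨k, h⟩ <;>
      · obtain ⟨hr, hd⟩ := symbolEquiv_invariants h
        rw [hr, hd, cuspidal_iff_ranges]
        simp
    rw [cuspidal_iff_ranges] at hcusp
    exact hcusp

end
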